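/- Define h : ℕ → ℕ by h(0) = h(1) = 0 and h(z) = 2^(⌊log₂ z⌋ − 1) for z ≥ 2. Then h satisfies condition (a): for all z, z' ∈ ℕ and every integer i ≥ 1, if ⌊z/2^i⌋ = ⌊z'/2^i⌋ then ⌊h(z)/2^(i-1)⌋ = ⌊h(z')/2^(i-1)⌋. -/

import Mathlib

/-- Condition (a): if `⌊z/2^i⌋ = ⌊z'/2^i⌋` for some `i ≥ 1`,
then `⌊h(z)/2^(i-1)⌋ = ⌊h(z')/2^(i-1)⌋`. -/
def CondA (h : ℕ → ℕ) : Prop :=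
  ∀ z z' i : ℕ, 1 ≤ i → z / 2 ^ i = z' / 2 ^ i →
    h z / 2 ^ (i - 1) = h z' / 2 ^ (i - 1)

lemma log_div_pow_aux (z i : ℕ) (hq : 1 ≤ z / 2 ^ i) :
    Nat.log 2 z = i + Nat.log 2 (z / 2 ^ i) := by
  set q := z / 2 ^ i with hqdef
  have h2i : 0 < 2 ^ i := Nat.pow_pos (by norm_num : 0 < 2)
  apply Nat.log_eq_of_pow_le_of_lt_pow
  · calc 2 ^ (i + Nat.log 2 q) = 2 ^ i * 2 ^ Nat.log 2 q := pow_add 2 i _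
    _ ≤ 2 ^ i * q := Nat.mul_le_mul_left _ (Nat.pow_log_le_self 2 (by omega))
    _ ≤ z := by rw [hqdef, mul_comm]; exact Nat.div_mul_le_self z _
  · have hlt : z / 2 ^ i < q + 1 := Nat.lt_succ_self q
    have hz : z < (q + 1) * 2 ^ i := (Nat.div_lt_iff_lt_mul h2i).mp hlt
    have hq1 : q + 1 ≤ 2 ^ (Nat.log 2 q + 1) := Nat.lt_pow_succ_log_self (by norm_num) q
    calc z < (q + 1) * 2 ^ i := hz
    _ ≤ 2 ^ (Nat.log 2 q + 1) * 2 ^ i := Nat.mul_le_mul_right _ hq1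
    _ = 2 ^ (i + Nat.log 2 q + 1) := by rw [← pow_add]; ring_nf
  
lemma h_div_aux (h : ℕ → ℕ) (h0 : h 0 = 0) (h1 : h 1 = 0)
    (hge2 : ∀ z, 2 ≤ z → h z = 2 ^ (Nat.log 2 z - 1))
    (z i : ℕ) (hi : 1 ≤ i) (hz : z / 2 ^ i = 0) :
    h z / 2 ^ (i - 1) = 0 := by
  have hzlt : z < 2 ^ i := ((Nat.div_eq_zero_iff).mp hz).resolve_left (Nat.pos_iff_ne_zero.mp (Nat.pow_pos (by norm_num : 0 < 2)))
  match z, hzlt with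
  | 0, _ => simp [h0]
  | 1, _ => simp [h1]
  | (n+2), hzlt =>
    rw [hge2 _ (by omega)]
    apply Nat.div_eq_of_lt
    apply Nat.pow_lt_pow_right (by norm_num)
    have hlog : Nat.log 2 (n+2) < i := Nat.log_lt_of_lt_pow (by omega) hzlt
    have hlog1 : 1 ≤ Nat.log 2 (n+2) := Nat.le_log_of_pow_le (by norm_num) (by omega)
    omega

theorem stmt_1 (h : ℕ → ℕ) (h0 : h 0 = 0) (h1 : h 1 = 0)
    (hge2 : ∀ z, 2 ≤ z → h z = 2 ^ (Nat.log 2 z - 1)) :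
    CondA h := by
  intro z z' i hi heq
  rcases Nat.eq_zero_or_pos (z / 2 ^ i) with hq | hq
  · rw [h_div_aux h h0 h1 hge2 z i hi hq,
      h_div_aux h h0 h1 hge2 z' i hi (heq ▸ hq)]
  · have hq' : 1 ≤ z' / 2 ^ i := heq ▸ hq
    have key : ∀ w : ℕ, 1 ≤ w / 2 ^ i →
        h w / 2 ^ (i - 1) = 2 ^ Nat.log 2 (w / 2 ^ i) := by
      intro w hw
      have hw2 : 2 ≤ w := by
        have : 2 ^ i ≤ w := (Nat.le_div_iff_mul_le (Nat.pow_pos (by norm_num : 0 < 2))).mp hw |>.trans_eq' (by ring)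
        have : 2 ≤ 2 ^ i := by
          calc 2 = 2 ^ 1 := rfl
          _ ≤ 2 ^ i := Nat.pow_le_pow_right (by norm_num) hi
        omega
      rw [hge2 w hw2, log_div_pow_aux w i hw,
        Nat.pow_div (by omega) (by norm_num)]
      congr 1
      omega
    rw [key z hq, key z' hq', heq]
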